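/- For n ≥ 2, the number of permutations of {1,...,n} that can be written in one-line notation as A n B, where A is a nonempty sequence, B is a (possibly empty) sequence, and every entry of A is larger than every entry of B, equals ∑_{i=0}^{n-2} i!·(n-1-i)!. -/

import Mathlib

open Finset Equiv

def blockFun (n p : ℕ) (hp : 0 < p) (hpn : p < n)
    (a : Perm (Fin p)) (b : Perm (Fin (n - 1 - p))) : Fin n → Fin n := fun i =>
  if h : i.val < p then ⟨n - 1 - p + (a ⟨i, h⟩).val, by have := (a ⟨i, h⟩).isLt; omega⟩
  else if h2 : i.val = p then ⟨n - 1, by omega⟩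
  else ⟨(b ⟨i.val - p - 1, by have := i.isLt; omega⟩).val,
    by have := (b ⟨i.val - p - 1, by have := i.isLt; omega⟩).isLt; omega⟩

lemma blockFun_injective (n p : ℕ) (hp : 0 < p) (hpn : p < n)
    (a : Perm (Fin p)) (b : Perm (Fin (n - 1 - p))) :
    Function.Injective (blockFun n p hp hpn a b) := by
  intro i j hij
  unfold blockFun at hij
  by_cases h1 : i.val < p <;> by_cases h2 : j.val < p
  · simp only [dif_pos h1, dif_pos h2, Fin.mk.injEq] at hij
    have : (a ⟨i, h1⟩ : Fin p) = a ⟨j, h2⟩ := by ext; omega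
    have := congrArg Fin.val (a.injective this)
    ext; simpa using this
  · by_cases h3 : j.val = p
    · simp only [dif_pos h1, dif_neg h2, dif_pos h3, Fin.mk.injEq] at hij
      have := (a ⟨i, h1⟩).isLt; omega
    · simp only [dif_pos h1, dif_neg h2, dif_neg h3, Fin.mk.injEq] at hij
      have := (b ⟨j.val - p - 1, by have := j.isLt; omega⟩).isLt
      omega
  · by_cases h3 : i.val = p
    · simp only [dif_neg h1, dif_pos h2, dif_pos h3, Fin.mk.injEq] at hij
      have := (a ⟨j, h2⟩).isLt; omega
    · simp only [dif_neg h1, dif_pos h2, dif_neg h3, Fin.mk.injEq] at hij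
      have := (b ⟨i.val - p - 1, by have := i.isLt; omega⟩).isLt
      omega
  · by_cases h3 : i.val = p <;> by_cases h4 : j.val = p
    · ext; omega
    · simp only [dif_neg h1, dif_neg h2, dif_pos h3, dif_neg h4, Fin.mk.injEq] at hij
      have := (b ⟨j.val - p - 1, by have := j.isLt; omega⟩).isLt
      omega
    · simp only [dif_neg h1, dif_neg h2, dif_neg h3, dif_pos h4, Fin.mk.injEq] at hij
      have := (b ⟨i.val - p - 1, by have := i.isLt; omega⟩).isLt
      omega
    · simp only [dif_neg h1, dif_neg h2, dif_neg h3, dif_neg h4, Fin.mk.injEq] at hij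
      have : (b ⟨i.val - p - 1, by have := i.isLt; omega⟩ : Fin (n-1-p)) =
          b ⟨j.val - p - 1, by have := j.isLt; omega⟩ := by ext; omega
      have := congrArg Fin.val (b.injective this)
      simp at this
      ext; have := i.isLt; have := j.isLt; omega

noncomputable def blockPerm (n p : ℕ) (hp : 0 < p) (hpn : p < n)
    (a : Perm (Fin p)) (b : Perm (Fin (n - 1 - p))) : Perm (Fin n) :=
  Equiv.ofBijective _ (Finite.injective_iff_bijective.mp (blockFun_injective n p hp hpn a b))

lemma blockPerm_apply (n p : ℕ) (hp : 0 < p) (hpn : p < n)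
    (a : Perm (Fin p)) (b : Perm (Fin (n - 1 - p))) (i : Fin n) :
    blockPerm n p hp hpn a b i = blockFun n p hp hpn a b i := rfl

set_option maxHeartbeats 1000000 in
lemma fiber_card (n p : ℕ) (hn : 2 ≤ n) (hp : 0 < p) (hpn : p < n) :
    ((Finset.univ : Finset (Perm (Fin n))).filter fun π =>
        ((⟨0, by omega⟩ : Fin n) < π.symm ⟨n - 1, by omega⟩ ∧
          ∀ i ℓ : Fin n, i < π.symm ⟨n - 1, by omega⟩ →
            π.symm ⟨n - 1, by omega⟩ < ℓ → π ℓ < π i) ∧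
        (π.symm ⟨n - 1, by omega⟩ : Fin n).val = p).card =
      p.factorial * (n - 1 - p).factorial := by
  have hcard : ((Finset.univ : Finset (Perm (Fin p) × Perm (Fin (n - 1 - p)))).card) =
      p.factorial * (n - 1 - p).factorial := by
    simp [Fintype.card_prod, Fintype.card_perm]
  rw [← hcard]
  refine (Finset.card_bij (fun pr _ => blockPerm n p hp hpn pr.1 pr.2) ?_ ?_ ?_).symm
  · -- maps into fiber
    rintro ⟨a, b⟩ -
    set π := blockPerm n p hp hpn a b with hπ
    have happ : ∀ i, π i = blockFun n p hp hpn a b i := fun i => rfl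
    have hpmax : π ⟨p, hpn⟩ = ⟨n - 1, by omega⟩ := by
      rw [happ]; unfold blockFun
      rw [dif_neg (lt_irrefl p), dif_pos rfl]
    have hsymm : π.symm ⟨n - 1, by omega⟩ = ⟨p, hpn⟩ := by
      rw [Equiv.symm_apply_eq, hpmax]
    simp only [Finset.mem_filter, Finset.mem_univ, true_and, hsymm]
    refine ⟨⟨?_, ?_⟩, trivial⟩
    · exact Fin.mk_lt_mk.mpr hp
    · intro i ℓ hi hℓ
      have hi' : i.val < p := hi
      have hℓ' : p < ℓ.val := hℓ
      rw [happ, happ]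
      unfold blockFun
      rw [dif_pos hi', dif_neg (by omega), dif_neg (by omega)]
      have := (b ⟨ℓ.val - p - 1, by have := ℓ.isLt; omega⟩).isLt
      exact Fin.mk_lt_mk.mpr (by omega)
  · -- injective
    intro pr1 h1 pr2 h2 hE
    obtain ⟨a, b⟩ := pr1
    obtain ⟨a', b'⟩ := pr2
    have hE' : blockPerm n p hp hpn a b = blockPerm n p hp hpn a' b' := hE
    have happ : ∀ i, blockFun n p hp hpn a b i = blockFun n p hp hpn a' b' i := by
      intro i
      rw [← blockPerm_apply n p hp hpn a b i, ← blockPerm_apply n p hp hpn a' b' i, hE']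
    have ha : a = a' := by
      ext x
      have hx := x.isLt
      have := happ ⟨x.val, by omega⟩
      unfold blockFun at this
      rw [dif_pos (by exact hx), dif_pos (by exact hx)] at this
      simp only [Fin.mk.injEq] at this
      have h1 : (⟨x.val, hx⟩ : Fin p) = x := rfl
      rw [h1] at this
      omega
    have hb : b = b' := by
      ext y
      have hy := y.isLt
      have hwy : p + 1 + y.val < n := by omega
      have hc1 : ¬((⟨p + 1 + y.val, hwy⟩ : Fin n).val < p) := by
        simp only [Fin.val_mk]; omega
      have hc2 : ¬((⟨p + 1 + y.val, hwy⟩ : Fin n).val = p) := by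
        simp only [Fin.val_mk]; omega
      have := happ ⟨p + 1 + y.val, hwy⟩
      unfold blockFun at this
      rw [dif_neg hc1, dif_neg hc2] at this
      simp only [Fin.val_mk] at this
      rw [dif_neg (show ¬(p + 1 + y.val < p) from by omega),
        dif_neg (show ¬(p + 1 + y.val = p) from by omega)] at this
      simp only [Fin.mk.injEq] at this
      have h1 : (⟨p + 1 + y.val - p - 1, by omega⟩ : Fin (n - 1 - p)) = y := by
        apply Fin.ext; simp only [Fin.val_mk]; omega
      rw [h1] at this
      exact this
    rw [ha, hb]
  · -- surjective
    intro π hπ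
    simp only [Finset.mem_filter, Finset.mem_univ, true_and] at hπ
    obtain ⟨⟨-, hcond⟩, hpos⟩ := hπ
    have hsymm : π.symm ⟨n - 1, by omega⟩ = ⟨p, hpn⟩ := by ext; exact hpos
    have hpmax : π ⟨p, hpn⟩ = ⟨n - 1, by omega⟩ := by
      rw [← hsymm, Equiv.apply_symm_apply]
    -- bounds
    have bound1 : ∀ i : Fin n, i.val < p → n - 1 - p ≤ (π i).val ∧ (π i).val < n - 1 := by
      intro i hi
      have hne : (π i).val ≠ n - 1 := by
        intro hecontra
        have : π i = π ⟨p, hpn⟩ := by rw [hpmax]; ext; exact hecontra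
        have := π.injective this
        have := congrArg Fin.val this
        simp at this; omega
      have hsub : (Finset.Ioi (⟨p, hpn⟩ : Fin n)).image π ⊆ Finset.Iio (π i) := by
        intro x hx
        simp only [Finset.mem_image, Finset.mem_Ioi] at hx
        obtain ⟨ℓ, hℓ, rfl⟩ := hx
        simp only [Finset.mem_Iio]
        exact hcond i ℓ (by rw [hsymm]; exact Fin.mk_lt_mk.mpr hi) (by rw [hsymm]; exact hℓ)
      have h1 := Finset.card_le_card hsub
      rw [Finset.card_image_of_injective _ π.injective, Fin.card_Ioi, Fin.card_Iio] at h1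
      have := (π i).isLt
      constructor
      · omega
      · omega
    have bound2 : ∀ ℓ : Fin n, p < ℓ.val → (π ℓ).val < n - 1 - p := by
      intro ℓ hℓ
      have hsub : (Finset.Iic (⟨p, hpn⟩ : Fin n)).image π ⊆ Finset.Ioi (π ℓ) := by
        intro x hx
        simp only [Finset.mem_image, Finset.mem_Iic] at hx
        obtain ⟨i, hi, rfl⟩ := hx
        simp only [Finset.mem_Ioi]
        rcases eq_or_lt_of_le hi with heq | hlt
        · rw [heq, hpmax]
          have hne : (π ℓ).val ≠ n - 1 := by
            intro hecontra
            have : π ℓ = π ⟨p, hpn⟩ := by rw [hpmax]; ext; exact hecontra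
            have := congrArg Fin.val (π.injective this)
            simp at this; omega
          have := (π ℓ).isLt
          rw [Fin.lt_def]
          simp only [Fin.val_mk]
          omega
        · exact hcond i ℓ (by rw [hsymm]; exact hlt) (by rw [hsymm]; exact Fin.mk_lt_mk.mpr hℓ)
      have h1 := Finset.card_le_card hsub
      rw [Finset.card_image_of_injective _ π.injective, Fin.card_Iic, Fin.card_Ioi] at h1
      omega
    -- build a and b
    have hfa : ∀ x : Fin p, p + 1 ≤ n := fun x => by omega
    refine ⟨⟨Equiv.ofBijective
        (fun x : Fin p => (⟨(π ⟨x.val, by omega⟩).val - (n - 1 - p), by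
          have := bound1 ⟨x.val, by omega⟩ x.isLt; omega⟩ : Fin p))
        (Finite.injective_iff_bijective.mp ?_),
      Equiv.ofBijective
        (fun y : Fin (n - 1 - p) => (⟨(π ⟨p + 1 + y.val, by have := y.isLt; omega⟩).val, by
          have := bound2 ⟨p + 1 + y.val, by have := y.isLt; omega⟩
            (by simp only [Fin.val_mk]; omega); omega⟩ : Fin (n - 1 - p)))
        (Finite.injective_iff_bijective.mp ?_)⟩,
      Finset.mem_univ _, ?_⟩
    · -- fa injective
      intro x y hxy
      simp only [Fin.mk.injEq] at hxy
      have hbx := bound1 ⟨x.val, by omega⟩ x.isLt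
      have hby := bound1 ⟨y.val, by omega⟩ y.isLt
      have : π ⟨x.val, by omega⟩ = π ⟨y.val, by omega⟩ := by apply Fin.ext; omega
      have := congrArg Fin.val (π.injective this)
      simp only [Fin.val_mk] at this
      exact Fin.ext this
    · -- fb injective
      intro x y hxy
      simp only [Fin.mk.injEq] at hxy
      have : π ⟨p + 1 + x.val, by have := x.isLt; omega⟩ =
          π ⟨p + 1 + y.val, by have := y.isLt; omega⟩ := by apply Fin.ext; exact hxy
      have := congrArg Fin.val (π.injective this)
      simp only [Fin.val_mk] at this
      exact Fin.ext (by omega)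
    · -- the block permutation equals π
      apply Equiv.ext
      intro i
      rw [blockPerm_apply]
      unfold blockFun
      by_cases h1 : i.val < p
      · rw [dif_pos h1]
        have hbd := bound1 i h1
        apply Fin.ext
        have hieq : (⟨i.val, by omega⟩ : Fin n) = i := rfl
        simp only [Fin.val_mk, Equiv.ofBijective_apply, hieq]
        omega
      · by_cases h2 : i.val = p
        · rw [dif_neg h1, dif_pos h2]
          have h3 : π i = ⟨n - 1, by omega⟩ := by rw [(Fin.ext h2 : i = (⟨p, hpn⟩ : Fin n)), hpmax]
          rw [h3]
        · rw [dif_neg h1, dif_neg h2]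
          apply Fin.ext
          have hieq : (⟨p + 1 + (i.val - p - 1), by have := i.isLt; omega⟩ : Fin n) = i :=
            Fin.ext (by simp only [Fin.val_mk]; have := i.isLt; omega)
          simp only [Fin.val_mk, Equiv.ofBijective_apply, hieq]

/-- For `n ≥ 2`, the number of permutations of `{1,…,n}` of the form `A n B`
with `A` nonempty (the maximum `n` not in the first position) and every entry of
`A` larger than every entry of `B`, equals `∑_{i=0}^{n-2} i!·(n-1-i)!`.
Here `π.symm ⟨n-1,_⟩` is the position of the maximum value. -/
theorem class31_containment_count (n : ℕ) (hn : 2 ≤ n) :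
    (Finset.univ.filter fun π : Equiv.Perm (Fin n) =>
        (⟨0, by omega⟩ : Fin n) < π.symm ⟨n - 1, by omega⟩ ∧
          ∀ i ℓ : Fin n, i < π.symm ⟨n - 1, by omega⟩ →
            π.symm ⟨n - 1, by omega⟩ < ℓ → π ℓ < π i).card =
      ∑ i ∈ Finset.range (n - 1), i.factorial * (n - 1 - i).factorial := by
  obtain ⟨m, rfl⟩ : ∃ m, n = m + 1 := ⟨n - 1, by omega⟩
  rw [Finset.card_eq_sum_card_fiberwise
    (f := fun π : Perm (Fin (m + 1)) =>
      ((Equiv.symm π) ⟨m + 1 - 1, by omega⟩ : Fin (m + 1)).val)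
    (t := Finset.range (m + 1)) (fun x _ => Finset.mem_range.mpr (Fin.is_lt _))]
  simp only [Finset.filter_filter]
  rw [Finset.sum_range_succ']
  have h0 : (Finset.univ.filter fun π : Perm (Fin (m + 1)) =>
      ((⟨0, by omega⟩ : Fin (m + 1)) < π.symm ⟨m + 1 - 1, by omega⟩ ∧
        ∀ i ℓ : Fin (m + 1), i < π.symm ⟨m + 1 - 1, by omega⟩ →
          π.symm ⟨m + 1 - 1, by omega⟩ < ℓ → π ℓ < π i) ∧
      (π.symm ⟨m + 1 - 1, by omega⟩ : Fin (m + 1)).val = 0).card = 0 := by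
    rw [Finset.card_eq_zero, Finset.filter_eq_empty_iff]
    intro π _
    rintro ⟨⟨hlt, -⟩, hzero⟩
    rw [Fin.lt_def] at hlt
    simp only [Fin.val_mk] at hlt
    omega
  rw [h0, add_zero]
  have hsum : ∀ j ∈ Finset.range m, (Finset.univ.filter fun π : Perm (Fin (m + 1)) =>
      ((⟨0, by omega⟩ : Fin (m + 1)) < π.symm ⟨m + 1 - 1, by omega⟩ ∧
        ∀ i ℓ : Fin (m + 1), i < π.symm ⟨m + 1 - 1, by omega⟩ →
          π.symm ⟨m + 1 - 1, by omega⟩ < ℓ → π ℓ < π i) ∧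
      (π.symm ⟨m + 1 - 1, by omega⟩ : Fin (m + 1)).val = j + 1).card =
      (j + 1).factorial * (m + 1 - 1 - (j + 1)).factorial := by
    intro j hj
    have hjm := Finset.mem_range.mp hj
    exact fiber_card (m + 1) (j + 1) hn (by omega) (by omega)
  rw [Finset.sum_congr rfl hsum]
  simp only [Nat.add_sub_cancel]
  rw [← Finset.sum_range_reflect (fun i => i.factorial * (m - i).factorial) m]
  refine Finset.sum_congr rfl fun j hj => ?_
  have hjm := Finset.mem_range.mp hj
  have e1 : m - (m - 1 - j) = j + 1 := by omega
  have e2 : m - (j + 1) = m - 1 - j := by omega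
  rw [e1, e2, Nat.mul_comm]
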